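/- arXiv:2501.09515 — 2 statements merged into one kernel-verified Lean document; each statement's English description precedes it below -/
import Mathlib

section
/- Let p be an odd prime and let L/L⁺ be a cyclic Galois extension of number fields of degree p−1 with Gal(L/L⁺) = ⟨γ⟩ and an isomorphism φ: Gal(L/L⁺) → F_p^×. Let 𝔯 be a prime ideal of L⁺ and let 𝔯₁,…,𝔯_k be the primes of L above 𝔯, permuted by γ. Suppose l ∈ L^× satisfies l^γ ≡ l^{φ(γ)} modulo (L^×)^p, and write the part of the fractional ideal (l) supported above 𝔯 as ∏_{i=1}^k 𝔯_i^{α_i} with this product not a p-th power of a fractional ideal. Then k = p−1. -/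
open NumberField nonZeroDivisors

open UniqueFactorizationMonoid in
lemma aux_dvd_map_iff {S : Type*} [CommRing S] (ρ : S ≃+* S) (I J : Ideal S) :
    Ideal.map (ρ : S →+* S) I ∣ Ideal.map (ρ : S →+* S) J ↔ I ∣ J := by
  constructor
  · rintro ⟨C, hC⟩
    have := congrArg (Ideal.map (ρ.symm : S →+* S)) hC
    rw [Ideal.map_of_equiv, Ideal.map_mul, Ideal.map_of_equiv] at this
    exact ⟨_, this⟩
  · rintro ⟨C, rfl⟩
    exact ⟨Ideal.map (ρ : S →+* S) C, by rw [Ideal.map_mul]⟩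

open UniqueFactorizationMonoid Classical in
lemma aux_count_map {S : Type*} [CommRing S] [IsDedekindDomain S]
    (ρ : S ≃+* S) (P J : Ideal S) (hP : Irreducible (Associates.mk P))
    (hP' : Irreducible (Associates.mk (Ideal.map (ρ : S →+* S) P))) (hJ : J ≠ ⊥) :
    (Associates.mk (Ideal.map (ρ : S →+* S) P)).count
        (Associates.mk (Ideal.map (ρ : S →+* S) J)).factors
      = (Associates.mk P).count (Associates.mk J).factors := by
  classical
  have hJ' : Ideal.map (ρ : S →+* S) J ≠ ⊥ := by
    intro h
    apply hJ
    have := congrArg (Ideal.map (ρ.symm : S →+* S)) h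
    rwa [Ideal.map_of_equiv, Ideal.map_bot] at this
  have hmkJ : Associates.mk J ≠ 0 := by
    rwa [ne_eq, Associates.mk_eq_zero]
  have hmkJ' : Associates.mk (Ideal.map (ρ : S →+* S) J) ≠ 0 := by
    rwa [ne_eq, Associates.mk_eq_zero]
  set n := (Associates.mk P).count (Associates.mk J).factors with hn
  have h1 : P ^ n ∣ J := by
    rw [← Associates.mk_le_mk_iff_dvd, Associates.mk_pow]
    exact (Associates.prime_pow_dvd_iff_le hmkJ hP).mpr le_rfl
  have h2 : ¬ P ^ (n + 1) ∣ J := by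
    rw [← Associates.mk_le_mk_iff_dvd, Associates.mk_pow]
    intro h
    exact Nat.not_succ_le_self n ((Associates.prime_pow_dvd_iff_le hmkJ hP).mp h)
  have h1' : (Ideal.map (ρ : S →+* S) P) ^ n ∣ Ideal.map (ρ : S →+* S) J := by
    rw [← Ideal.map_pow]
    exact (aux_dvd_map_iff ρ _ _).mpr h1
  have h2' : ¬ (Ideal.map (ρ : S →+* S) P) ^ (n + 1) ∣ Ideal.map (ρ : S →+* S) J := by
    rw [← Ideal.map_pow]
    exact fun h => h2 ((aux_dvd_map_iff ρ _ _).mp h)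
  have hle : n ≤ (Associates.mk (Ideal.map (ρ : S →+* S) P)).count
      (Associates.mk (Ideal.map (ρ : S →+* S) J)).factors := by
    rw [← Associates.prime_pow_dvd_iff_le hmkJ' hP', ← Associates.mk_pow,
      Associates.mk_le_mk_iff_dvd]
    exact h1'
  have hlt : ¬ n + 1 ≤ (Associates.mk (Ideal.map (ρ : S →+* S) P)).count
      (Associates.mk (Ideal.map (ρ : S →+* S) J)).factors := by
    rw [← Associates.prime_pow_dvd_iff_le hmkJ' hP', ← Associates.mk_pow,
      Associates.mk_le_mk_iff_dvd]
    exact h2'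
  omega

/-- Let `L/L⁺` be a cyclic Galois extension of number fields of degree
`p − 1` (`p` an odd prime) with `Gal(L/L⁺) = ⟨γ⟩` and an isomorphism
`φ : Gal(L/L⁺) ≃ F_p^×`. Let `𝔯` be a (nonzero) prime of `L⁺` and `𝔯_1, …, 𝔯_k` the
primes of `L` above `𝔯`. If `l ∈ L^×` satisfies `l^γ ≡ l^{φ(γ)} mod (L^×)^p` and the
part of the fractional ideal `(l)` supported above `𝔯` is `∏ 𝔯_i^{α_i}`, not a `p`-th
power of a fractional ideal, then `k = p − 1`. -/
theorem stmt_0 (p : ℕ) (hp : p.Prime) (hodd : Odd p)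
    (Lplus L : Type) [Field Lplus] [NumberField Lplus] [Field L] [NumberField L]
    [Algebra Lplus L] [IsGalois Lplus L] (hdeg : Module.finrank Lplus L = p - 1)
    (γ : L ≃ₐ[Lplus] L) (hγ : ∀ g : L ≃ₐ[Lplus] L, g ∈ Subgroup.zpowers γ)
    (φ : (L ≃ₐ[Lplus] L) ≃* (ZMod p)ˣ)
    (𝔯 : Ideal (𝓞 Lplus)) (h𝔯 : 𝔯.IsPrime) (h𝔯0 : 𝔯 ≠ ⊥)
    (k : ℕ) (R : Fin k → Ideal (𝓞 L)) (hRinj : Function.Injective R)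
    (hAbove : ∀ Q : Ideal (𝓞 L),
      (Q.IsPrime ∧ Q ≠ ⊥ ∧ Ideal.comap (algebraMap (𝓞 Lplus) (𝓞 L)) Q = 𝔯) ↔ ∃ i, Q = R i)
    (l : Lˣ)
    (hSel : ∃ m : Lˣ, γ (l : L) = (l : L) ^ (((φ γ : (ZMod p)ˣ) : ZMod p).val) * (m : L) ^ p)
    (α : Fin k → ℤ) (A B : Ideal (𝓞 L))
    (hcop : ∀ i, ¬ (R i ∣ A) ∧ ¬ (R i ∣ B))
    (hdecomp : FractionalIdeal.spanSingleton (𝓞 L)⁰ (l : L) =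
      (∏ i : Fin k, ((R i : FractionalIdeal (𝓞 L)⁰ L) ^ (α i))) *
        ((A : FractionalIdeal (𝓞 L)⁰ L) / (B : FractionalIdeal (𝓞 L)⁰ L)))
    (hnp : ¬ ∃ J : FractionalIdeal (𝓞 L)⁰ L,
      (∏ i : Fin k, ((R i : FractionalIdeal (𝓞 L)⁰ L) ^ (α i))) = J ^ p) :
    k = p - 1 := by
  classical
  have hp2 : 2 ≤ p := hp.two_le
  haveI : Fact p.Prime := ⟨hp⟩
  haveI : NeZero p := ⟨hp.ne_zero⟩
  haveI : Fact (1 < p) := ⟨hp.one_lt⟩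
  have hfd : FiniteDimensional Lplus L := by
    have : 0 < Module.finrank Lplus L := by
      rw [hdeg]; omega
    exact Module.finite_of_finrank_pos this
  -- restriction of an automorphism to the ring of integers, as a ring equiv
  set ρ : (L ≃ₐ[Lplus] L) → ((𝓞 L) ≃+* (𝓞 L)) :=
    fun g => (galRestrict (𝓞 Lplus) Lplus L (𝓞 L) g).toRingEquiv with hρ
  -- properties of the R i
  have hRprop : ∀ i, (R i).IsPrime ∧ R i ≠ ⊥ ∧
      Ideal.comap (algebraMap (𝓞 Lplus) (𝓞 L)) (R i) = 𝔯 :=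
    fun i => (hAbove (R i)).mpr ⟨i, rfl⟩
  -- the map of a prime above 𝔯 is a prime above 𝔯
  have hmapabove : ∀ (g : L ≃ₐ[Lplus] L) (i : Fin k), ∃ j,
      Ideal.map (ρ g : (𝓞 L) →+* (𝓞 L)) (R i) = R j := by
    intro g i
    apply (hAbove _).mp
    haveI := (hRprop i).1
    refine ⟨?_, ?_, ?_⟩
    · exact Ideal.map_isPrime_of_equiv (ρ g)
    · intro h
      have := congrArg (Ideal.map ((ρ g).symm : (𝓞 L) →+* (𝓞 L))) h
      rw [Ideal.map_of_equiv, Ideal.map_bot] at this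
      exact (hRprop i).2.1 this
    · have hmc : Ideal.map (ρ g : (𝓞 L) →+* (𝓞 L)) (R i)
          = Ideal.comap ((ρ g).symm : (𝓞 L) →+* (𝓞 L)) (R i) :=
        Ideal.map_comap_of_equiv (ρ g)
      rw [hmc, Ideal.comap_comap]
      have : (((ρ g).symm : (𝓞 L) →+* (𝓞 L)).comp (algebraMap (𝓞 Lplus) (𝓞 L)))
          = algebraMap (𝓞 Lplus) (𝓞 L) := by
        ext x
        exact congrArg (fun y : 𝓞 L => (y : L))
          ((galRestrict (𝓞 Lplus) Lplus L (𝓞 L) g).symm.commutes x)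
      rw [this]
      exact (hRprop i).2.2
  -- the permutation induced by γ
  set τ : Fin k → Fin k := fun i => (hmapabove γ i).choose with hτ
  have hτspec : ∀ i, Ideal.map (ρ γ : (𝓞 L) →+* (𝓞 L)) (R i) = R (τ i) :=
    fun i => (hmapabove γ i).choose_spec
  have hmapinj : ∀ g : L ≃ₐ[Lplus] L, Function.Injective
      (Ideal.map (ρ g : (𝓞 L) →+* (𝓞 L)) : Ideal (𝓞 L) → Ideal (𝓞 L)) := by
    intro g I J h
    have := congrArg (Ideal.map ((ρ g).symm : (𝓞 L) →+* (𝓞 L))) h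
    rwa [Ideal.map_of_equiv, Ideal.map_of_equiv] at this
  have hτinj : Function.Injective τ := by
    intro i j h
    apply hRinj
    apply hmapinj γ
    rw [hτspec i, hτspec j, h]
  -- iterates
  have hiter : ∀ (n : ℕ) (i : Fin k),
      Ideal.map (ρ (γ ^ n) : (𝓞 L) →+* (𝓞 L)) (R i) = R (τ^[n] i) := by
    intro n
    induction n with
    | zero =>
      intro i
      have h1 : ρ (γ ^ 0) = RingEquiv.refl (𝓞 L) := by
        rw [pow_zero, hρ]
        ext x
        exact congrArg (fun y : 𝓞 L => (y : L))
          (congrArg (fun (e : (𝓞 L) ≃ₐ[𝓞 Lplus] (𝓞 L)) => e x)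
            (map_one (galRestrict (𝓞 Lplus) Lplus L (𝓞 L))))
      rw [h1]
      simp [Ideal.map_id]
    | succ n ih =>
      intro i
      have h1 : (ρ (γ ^ (n + 1)) : (𝓞 L) →+* (𝓞 L))
          = ((ρ γ : (𝓞 L) →+* (𝓞 L)).comp (ρ (γ ^ n) : (𝓞 L) →+* (𝓞 L))) := by
        ext x
        have h2 : γ ^ (n + 1) = γ * γ ^ n := by rw [pow_succ']
        rw [h2]
        have h3 := congrArg (fun (e : (𝓞 L) ≃ₐ[𝓞 Lplus] (𝓞 L)) => e x)
          (map_mul (galRestrict (𝓞 Lplus) Lplus L (𝓞 L)) γ (γ ^ n))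
        exact congrArg (fun y : 𝓞 L => (y : L)) h3
      rw [h1, ← Ideal.map_map, ih i, hτspec, Function.iterate_succ_apply']
  -- the height one spectrum elements
  set vI : Fin k → IsDedekindDomain.HeightOneSpectrum (𝓞 L) :=
    fun i => ⟨R i, (hRprop i).1, (hRprop i).2.1⟩ with hvI
  have hvIasIdeal : ∀ i, (vI i).asIdeal = R i := fun i => rfl
  have hvIinj : ∀ i j, vI j = vI i → j = i := by
    intro i j h
    apply hRinj
    rw [← hvIasIdeal, ← hvIasIdeal, h]
  -- nonvanishing facts
  have hspan_ne : ∀ x : Lˣ, FractionalIdeal.spanSingleton (𝓞 L)⁰ (x : L) ≠ 0 := by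
    intro x
    rw [ne_eq, FractionalIdeal.spanSingleton_eq_zero_iff]
    exact x.ne_zero
  have hfac_ne : ∀ i, ((R i : FractionalIdeal (𝓞 L)⁰ L) ^ (α i)) ≠ 0 := by
    intro i
    apply zpow_ne_zero
    rw [ne_eq, FractionalIdeal.coeIdeal_eq_zero]
    exact (hRprop i).2.1
  have hprod_ne : (∏ i : Fin k, ((R i : FractionalIdeal (𝓞 L)⁰ L) ^ (α i))) ≠ 0 :=
    Finset.prod_ne_zero_iff.mpr (fun i _ => hfac_ne i)
  have hA0 : (A : FractionalIdeal (𝓞 L)⁰ L) ≠ 0 := by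
    intro h
    apply hspan_ne l
    rw [hdecomp, h, zero_div, mul_zero]
  have hB0 : (B : FractionalIdeal (𝓞 L)⁰ L) ≠ 0 := by
    intro h
    apply hspan_ne l
    rw [hdecomp, h, div_zero, mul_zero]
  have hAbot : A ≠ ⊥ := by
    rwa [ne_eq, ← FractionalIdeal.coeIdeal_eq_zero (K := L)]
  have hBbot : B ≠ ⊥ := by
    rwa [ne_eq, ← FractionalIdeal.coeIdeal_eq_zero (K := L)]
  have hdiv_ne : (A : FractionalIdeal (𝓞 L)⁰ L) / (B : FractionalIdeal (𝓞 L)⁰ L) ≠ 0 := by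
    rw [div_eq_mul_inv]
    exact mul_ne_zero hA0 (inv_ne_zero hB0)
  -- count of an integral ideal
  have hcntIdeal : ∀ (v : IsDedekindDomain.HeightOneSpectrum (𝓞 L)) (C : Ideal (𝓞 L)), C ≠ ⊥ →
      FractionalIdeal.count L v (C : FractionalIdeal (𝓞 L)⁰ L)
        = ((Associates.mk v.asIdeal).count (Associates.mk C).factors : ℤ) := by
    intro v C hC
    have h1 : (C : FractionalIdeal (𝓞 L)⁰ L)
        = FractionalIdeal.spanSingleton (𝓞 L)⁰ ((algebraMap (𝓞 L) L) 1)⁻¹ * C := by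
      rw [map_one, inv_one, FractionalIdeal.spanSingleton_one, one_mul]
    rw [FractionalIdeal.count_well_defined L v
      (by rwa [ne_eq, FractionalIdeal.coeIdeal_eq_zero]) h1,
      Ideal.span_singleton_one, ← Ideal.one_eq_top, Associates.mk_one, Associates.factors_one,
      Associates.count_zero v.associates_irreducible]
    omega
  have hcntA : ∀ i, FractionalIdeal.count L (vI i) (A : FractionalIdeal (𝓞 L)⁰ L) = 0 := by
    intro i
    rw [hcntIdeal (vI i) A hAbot]
    norm_cast
    by_contra h
    exact (hcop i).1 ((Associates.count_ne_zero_iff_dvd hAbot (vI i).irreducible).mp h)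
  have hcntB : ∀ i, FractionalIdeal.count L (vI i) (B : FractionalIdeal (𝓞 L)⁰ L) = 0 := by
    intro i
    rw [hcntIdeal (vI i) B hBbot]
    norm_cast
    by_contra h
    exact (hcop i).2 ((Associates.count_ne_zero_iff_dvd hBbot (vI i).irreducible).mp h)
  -- count of the principal fractional ideal of l
  have hcnt_l : ∀ i, FractionalIdeal.count L (vI i)
      (FractionalIdeal.spanSingleton (𝓞 L)⁰ (l : L)) = α i := by
    intro i
    rw [hdecomp, FractionalIdeal.count_mul L (vI i) hprod_ne hdiv_ne, div_eq_mul_inv,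
      FractionalIdeal.count_mul L (vI i) hA0 (inv_ne_zero hB0),
      FractionalIdeal.count_inv, hcntA, hcntB,
      FractionalIdeal.count_prod L (vI i) Finset.univ _ (fun j _ => hfac_ne j)]
    have hterm : ∀ j : Fin k, FractionalIdeal.count L (vI i)
        ((R j : FractionalIdeal (𝓞 L)⁰ L) ^ (α j)) = if j = i then α j else 0 := by
      intro j
      rw [FractionalIdeal.count_zpow]
      have : (R j : FractionalIdeal (𝓞 L)⁰ L) = ((vI j).asIdeal : FractionalIdeal (𝓞 L)⁰ L) :=
        rfl
      rw [this, FractionalIdeal.count_maximal]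
      by_cases h : j = i
      · subst h; simp
      · have : ¬ (vI j = vI i) := fun hc => h (hvIinj i j hc)
        rw [if_neg this, if_neg h, mul_zero]
    rw [Finset.sum_congr rfl (fun j _ => hterm j), Finset.sum_ite_eq' Finset.univ i α,
      if_pos (Finset.mem_univ i)]
    ring
  -- equivariance of counts under the Galois action
  have hequi : ∀ (g : L ≃ₐ[Lplus] L) (v w : IsDedekindDomain.HeightOneSpectrum (𝓞 L)),
      w.asIdeal = Ideal.map (ρ g : (𝓞 L) →+* (𝓞 L)) v.asIdeal → ∀ x : Lˣ,
      FractionalIdeal.count L w (FractionalIdeal.spanSingleton (𝓞 L)⁰ (g (x : L))) =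
      FractionalIdeal.count L v (FractionalIdeal.spanSingleton (𝓞 L)⁰ (x : L)) := by
    intro g v w hw x
    obtain ⟨a, b, hb, hab⟩ := IsFractionRing.div_surjective (A := 𝓞 L) (x : L)
    have hb0 : b ≠ 0 := nonZeroDivisors.ne_zero hb
    have ha0 : a ≠ 0 := by
      intro h
      apply x.ne_zero
      rw [← hab, h, map_zero, zero_div]
    have hximg : FractionalIdeal.spanSingleton (𝓞 L)⁰ (x : L)
        = FractionalIdeal.spanSingleton (𝓞 L)⁰ ((algebraMap (𝓞 L) L) b)⁻¹
          * (Ideal.span {a} : Ideal (𝓞 L)) := by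
      rw [FractionalIdeal.coeIdeal_span_singleton,
        FractionalIdeal.spanSingleton_mul_spanSingleton, ← hab, inv_mul_eq_div]
    have hgx : (g (x : L)) = (algebraMap (𝓞 L) L) ((ρ g) a) / (algebraMap (𝓞 L) L) ((ρ g) b) := by
      rw [← hab, map_div₀]
      congr 1
      · exact (algebraMap_galRestrict_apply (𝓞 Lplus) g a).symm
      · exact (algebraMap_galRestrict_apply (𝓞 Lplus) g b).symm
    have hgb0 : (ρ g) b ≠ 0 := fun h => hb0 (by
      have := congrArg (ρ g).symm h
      rwa [RingEquiv.symm_apply_apply, map_zero] at this)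
    have hgximg : FractionalIdeal.spanSingleton (𝓞 L)⁰ (g (x : L))
        = FractionalIdeal.spanSingleton (𝓞 L)⁰ ((algebraMap (𝓞 L) L) ((ρ g) b))⁻¹
          * (Ideal.span {(ρ g) a} : Ideal (𝓞 L)) := by
      rw [FractionalIdeal.coeIdeal_span_singleton,
        FractionalIdeal.spanSingleton_mul_spanSingleton, hgx, inv_mul_eq_div]
    have hgx_ne : FractionalIdeal.spanSingleton (𝓞 L)⁰ (g (x : L)) ≠ 0 := by
      rw [ne_eq, FractionalIdeal.spanSingleton_eq_zero_iff]
      intro h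
      apply x.ne_zero
      have := congrArg g.symm h
      rwa [AlgEquiv.symm_apply_apply, map_zero] at this
    rw [FractionalIdeal.count_well_defined L v (hspan_ne x) hximg,
      FractionalIdeal.count_well_defined L w hgx_ne hgximg]
    have hspan_a : Ideal.span {(ρ g) a} = Ideal.map (ρ g : (𝓞 L) →+* (𝓞 L)) (Ideal.span {a}) := by
      rw [Ideal.map_span, Set.image_singleton]
      rfl
    have hspan_b : Ideal.span {(ρ g) b} = Ideal.map (ρ g : (𝓞 L) →+* (𝓞 L)) (Ideal.span {b}) := by
      rw [Ideal.map_span, Set.image_singleton]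
      rfl
    have hwirr : Irreducible (Associates.mk (Ideal.map (ρ g : (𝓞 L) →+* (𝓞 L)) v.asIdeal)) := by
      rw [← hw]; exact w.associates_irreducible
    rw [hspan_a, hspan_b, hw,
      aux_count_map (ρ g) v.asIdeal (Ideal.span {a}) v.associates_irreducible hwirr
        (by rwa [ne_eq, Ideal.span_singleton_eq_bot]),
      aux_count_map (ρ g) v.asIdeal (Ideal.span {b}) v.associates_irreducible hwirr
        (by rwa [ne_eq, Ideal.span_singleton_eq_bot])]
  -- iterate the Selmer condition
  have hsel : ∀ n : ℕ, ∃ m : Lˣ, (γ ^ n) (l : L)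
      = (l : L) ^ ((((φ γ) ^ n : (ZMod p)ˣ) : ZMod p).val) * (m : L) ^ p := by
    intro n
    induction n with
    | zero =>
      refine ⟨1, ?_⟩
      simp [ZMod.val_one]
    | succ n ih =>
      obtain ⟨mn, hmn⟩ := ih
      obtain ⟨m1, hm1⟩ := hSel
      set e1 : ℕ := ((φ γ : (ZMod p)ˣ) : ZMod p).val with he1
      set en : ℕ := (((φ γ) ^ n : (ZMod p)ˣ) : ZMod p).val with hen
      set en1 : ℕ := (((φ γ) ^ (n + 1) : (ZMod p)ˣ) : ZMod p).val with hen1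
      have hpown : (γ ^ (n + 1)) (l : L) = (γ ^ n) (γ (l : L)) := by
        rw [pow_succ]
        rfl
      have hgn : ∀ y : L, (γ ^ n) (y) = (γ ^ n) y := fun y => rfl
      have step1 : (γ ^ (n + 1)) (l : L)
          = ((γ ^ n) (l : L)) ^ e1 * ((γ ^ n) (m1 : L)) ^ p := by
        rw [hpown, hm1, map_mul, map_pow, map_pow]
      have step2 : (γ ^ (n + 1)) (l : L)
          = (l : L) ^ (en * e1) * (((mn : L) ^ e1 * (γ ^ n) (m1 : L)) ^ p) := by
        rw [step1, hmn]
        ring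
      have hval : en1 = (en * e1) % p := by
        rw [hen1, hen, he1, pow_succ, Units.val_mul, ZMod.val_mul]
      have hlsplit : (l : L) ^ (en * e1) = (l : L) ^ en1 * ((l : L) ^ ((en * e1) / p)) ^ p := by
        rw [← pow_mul, ← pow_add]
        congr 1
        rw [hval]
        exact (Nat.mod_add_div' (en * e1) p).symm
      refine ⟨mn ^ e1 * Units.map (MonoidHomClass.toMonoidHom (γ ^ n)) m1 * l ^ ((en * e1) / p),
        ?_⟩
      rw [step2, hlsplit]
      push_cast
      rw [Units.coe_map]
      have hcoe : ((MonoidHomClass.toMonoidHom (γ ^ n) : L →* L) ((m1 : L))) = (γ ^ n) (m1 : L) :=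
        rfl
      rw [hcoe]
      ring
  -- k is nonzero
  have hk0 : k ≠ 0 := by
    intro h
    apply hnp
    refine ⟨1, ?_⟩
    subst h
    simp
  -- build the permutation as an Equiv to get periodicity
  have hτbij : Function.Bijective τ := Finite.injective_iff_bijective.mp hτinj
  set τe : Equiv.Perm (Fin k) := Equiv.ofBijective τ hτbij with hτe
  have hτecoe : ∀ i, τe i = τ i := fun i => rfl
  have hτeiter : ∀ (n : ℕ) (i : Fin k), (τe ^ n) i = τ^[n] i := by
    intro n i
    rw [Equiv.Perm.coe_pow]
    rfl
  -- pick an index where α is not divisible by p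
  have hα : ∃ i, ¬ ((p : ℤ) ∣ α i) := by
    by_contra h
    push_neg at h
    apply hnp
    refine ⟨∏ i : Fin k, ((R i : FractionalIdeal (𝓞 L)⁰ L) ^ (α i / p)), ?_⟩
    rw [← Finset.prod_pow]
    apply Finset.prod_congr rfl
    intro i _
    rw [← zpow_natCast ((R i : FractionalIdeal (𝓞 L)⁰ L) ^ (α i / p)) p, ← zpow_mul]
    congr 1
    exact (Int.ediv_mul_cancel (h i)).symm
  obtain ⟨i₀, hi₀⟩ := hα
  -- the minimal period of i₀ under τ
  set c := Function.minimalPeriod τ i₀ with hc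
  have hNpos : 0 < orderOf τe := orderOf_pos τe
  have hper : Function.IsPeriodicPt τ (orderOf τe) i₀ := by
    show τ^[orderOf τe] i₀ = i₀
    rw [← hτeiter, pow_orderOf_eq_one τe]
    rfl
  have hcpos : 0 < c := hper.minimalPeriod_pos hNpos
  have hcfix : τ^[c] i₀ = i₀ := Function.iterate_minimalPeriod
  have hck : c ≤ k := by
    have hinj : Set.InjOn (fun n => τ^[n] i₀) ↑(Finset.range c) := by
      intro a ha b hb hab
      apply Function.iterate_injOn_Iio_minimalPeriod (x := i₀) (f := τ) ?_ ?_ hab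
      · rw [Finset.coe_range] at ha; exact ha
      · rw [Finset.coe_range] at hb; exact hb
    have := Finset.card_le_card_of_injOn (fun n => τ^[n] i₀)
      (fun a _ => Finset.mem_univ _) hinj
    simpa using this
  -- apply counts to the iterated Selmer relation at i₀
  obtain ⟨m, hm⟩ := hsel c
  set ec : ℕ := (((φ γ) ^ c : (ZMod p)ˣ) : ZMod p).val with hec
  have hLHS : FractionalIdeal.count L (vI i₀)
      (FractionalIdeal.spanSingleton (𝓞 L)⁰ ((γ ^ c) (l : L))) = α i₀ := by
    rw [hequi (γ ^ c) (vI i₀) (vI i₀) (by rw [hvIasIdeal, hiter c i₀, hcfix]) l]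
    exact hcnt_l i₀
  have hRHS : FractionalIdeal.count L (vI i₀)
      (FractionalIdeal.spanSingleton (𝓞 L)⁰ ((γ ^ c) (l : L)))
      = (ec : ℤ) * α i₀ + (p : ℤ) * FractionalIdeal.count L (vI i₀)
          (FractionalIdeal.spanSingleton (𝓞 L)⁰ (m : L)) := by
    rw [hm, ← FractionalIdeal.spanSingleton_mul_spanSingleton,
      ← FractionalIdeal.spanSingleton_pow, ← FractionalIdeal.spanSingleton_pow,
      FractionalIdeal.count_mul L (vI i₀) (pow_ne_zero _ (hspan_ne l)) (pow_ne_zero _ (hspan_ne m)),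
      FractionalIdeal.count_pow, FractionalIdeal.count_pow, hcnt_l i₀]
  -- conclude (φ γ)^c = 1 in (ZMod p)ˣ
  have hmodp : ((α i₀ : ZMod p)) = (((φ γ) ^ c : (ZMod p)ˣ) : ZMod p) * (α i₀ : ZMod p) := by
    have h1 : (α i₀ : ℤ) = (ec : ℤ) * α i₀ + (p : ℤ) * FractionalIdeal.count L (vI i₀)
        (FractionalIdeal.spanSingleton (𝓞 L)⁰ (m : L)) := by
      rw [hLHS] at hRHS
      exact hRHS
    have h2 := congrArg (fun z : ℤ => (z : ZMod p)) h1
    push_cast at h2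
    rwa [ZMod.natCast_self, zero_mul, add_zero, hec, ZMod.natCast_val, ZMod.cast_id] at h2
  have hαi₀ : (α i₀ : ZMod p) ≠ 0 := by
    rw [ne_eq, ZMod.intCast_zmod_eq_zero_iff_dvd]
    exact hi₀
  have hu1 : (φ γ) ^ c = 1 := by
    have h3 : ((((φ γ) ^ c : (ZMod p)ˣ) : ZMod p) - 1) * (α i₀ : ZMod p) = 0 := by
      rw [sub_mul, one_mul, ← hmodp, sub_self]
    have h4 : (((φ γ) ^ c : (ZMod p)ˣ) : ZMod p) - 1 = 0 := by
      rcases mul_eq_zero.mp h3 with h | h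
      · exact h
      · exact absurd h hαi₀
    ext
    rw [sub_eq_zero] at h4
    simpa using h4
  -- order of γ is p - 1
  have hordγ : orderOf γ = p - 1 := by
    rw [orderOf_eq_card_of_forall_mem_zpowers hγ,
      IsGalois.card_aut_eq_finrank, hdeg]
  have hordφγ : orderOf (φ γ) = p - 1 := by
    have h := orderOf_injective φ.toMonoidHom φ.injective γ
    exact h.trans hordγ
  have hdvd : (p - 1) ∣ c := by
    rw [← hordφγ]
    exact orderOf_dvd_of_pow_eq_one hu1
  have hp1lek : p - 1 ≤ k := le_trans (Nat.le_of_dvd hcpos hdvd) hck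
  -- the upper bound: k ≤ p - 1 via sum of ramification indices
  have hklep : k ≤ p - 1 := by
    haveI : 𝔯.IsMaximal := h𝔯.isMaximal h𝔯0
    have hsum := Ideal.sum_ramification_inertia (R := 𝓞 Lplus) (𝓞 L) Lplus L (p := 𝔯) h𝔯0
    rw [hdeg] at hsum
    set T := (UniqueFactorizationMonoid.factors
      (Ideal.map (algebraMap (𝓞 Lplus) (𝓞 L)) 𝔯)).toFinset with hT
    have halgmap_inj : Function.Injective (algebraMap (𝓞 Lplus) (𝓞 L)) := by
      intro x y h
      have h2 : (algebraMap (𝓞 Lplus) L) x = (algebraMap (𝓞 Lplus) L) y := by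
        rw [IsScalarTower.algebraMap_eq (𝓞 Lplus) (𝓞 L) L, RingHom.comp_apply,
          RingHom.comp_apply, h]
      exact (FaithfulSMul.algebraMap_injective (𝓞 Lplus) L) h2
    have hmapbot : Ideal.map (algebraMap (𝓞 Lplus) (𝓞 L)) 𝔯 ≠ ⊥ := by
      rw [ne_eq, Ideal.map_eq_bot_iff_of_injective halgmap_inj]
      exact h𝔯0
    have hmem : ∀ i, R i ∈ T := by
      intro i
      rw [hT, Multiset.mem_toFinset,
        UniqueFactorizationMonoid.factors_eq_normalizedFactors,
        Ideal.mem_normalizedFactors_iff hmapbot]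
      refine ⟨(hRprop i).1, ?_⟩
      rw [Ideal.map_le_iff_le_comap, (hRprop i).2.2]
    have hkcard : k ≤ T.card := by
      have := Finset.card_le_card_of_injOn (s := (Finset.univ : Finset (Fin k))) (t := T) R
        (fun i _ => hmem i) (fun a _ b _ h => hRinj h)
      simpa using this
    have hcard_le : T.card ≤ ∑ P ∈ T,
        Ideal.ramificationIdx' 𝔯 P
          * Ideal.inertiaDeg' 𝔯 P := by
      rw [Finset.card_eq_sum_ones]
      apply Finset.sum_le_sum
      intro P hP
      have h1 : Ideal.ramificationIdx' 𝔯 P ≠ 0 :=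
        Ideal.Factors.ramificationIdx_ne_zero 𝔯 ⟨P, hP⟩
      have h2 : 0 < Ideal.inertiaDeg' 𝔯 P := by
        haveI : P.LiesOver 𝔯 := (Ideal.Factors.liesOver 𝔯 ⟨P, hP⟩)
        exact Ideal.inertiaDeg'_pos 𝔯 P
      exact Nat.one_le_iff_ne_zero.mpr (mul_ne_zero h1 h2.ne')
    change ∑ P ∈ T, _ = p - 1 at hsum
    omega
  omega
end

section
/- Let p be an odd prime, G = ⟨γ⟩ a cyclic group of order p−1 acting on a finite set {𝔯₁,…,𝔯_k} transitively-compatibly via an index action, and φ: G → F_p^× an isomorphism. If integers α₁,…,α_k (not all divisible by p) satisfy α_i ≡ φ(γ)·α_{γ·i} (mod p) for all i, where γ acts on indices by a permutation, then the order of γ on the orbit of any index i with α_i ≢ 0 (mod p) equals p−1; in particular p−1 divides k. -/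
/-- combinatorial core of the `p`-descent support argument. A generator `γ`
of a cyclic group of order `p−1` permutes the indices `{1, …, k}` (transitively), `e = φ(γ)`
is a generator of `F_p^×`, and the exponent vector `α` (not all zero mod `p`) satisfies
`α i = e * α (γ i)`. Then the order of `γ` on the orbit of any index `i` with `α i ≠ 0`
is `p−1`, and in particular `p−1 ∣ k`. -/
theorem stmt_1 (p k : ℕ) (hp : p.Prime) (hodd : Odd p) (hk : 0 < k)
    (γ : Equiv.Perm (Fin k)) (hγ : γ ^ (p - 1) = 1)
    (htrans : ∀ i j : Fin k, ∃ n : ℕ, (⇑γ)^[n] i = j)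
    (e : (ZMod p)ˣ) (he : orderOf e = p - 1)
    (α : Fin k → ZMod p) (hα0 : ∃ i, α i ≠ 0)
    (hα : ∀ i, α i = (e : ZMod p) * α (γ i)) :
    (∀ i, α i ≠ 0 → Function.minimalPeriod (⇑γ) i = p - 1) ∧ (p - 1) ∣ k := by
  have hp1 : 0 < p - 1 := by
    have := hp.two_le
    omega
  -- every point is periodic with period p - 1
  have hper : ∀ i : Fin k, Function.IsPeriodicPt (⇑γ) (p - 1) i := by
    intro i
    have : (⇑(γ ^ (p - 1))) i = i := by rw [hγ]; rfl
    simpa [Function.IsPeriodicPt, Function.IsFixedPt,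
      Equiv.Perm.iterate_eq_pow] using this
  have hiter : ∀ (i : Fin k) (n : ℕ), α i = (e : ZMod p) ^ n * α ((⇑γ)^[n] i) := by
    intro i n
    induction n generalizing i with
    | zero => simp
    | succ n ih =>
      rw [hα i, ih (γ i), Function.iterate_succ_apply, pow_succ']
      ring
  have key : ∀ i : Fin k, α i ≠ 0 → Function.minimalPeriod (⇑γ) i = p - 1 := by
    intro i hi
    set m := Function.minimalPeriod (⇑γ) i with hm
    have hmd : m ∣ p - 1 := (hper i).minimalPeriod_dvd
    have hfix : (⇑γ)^[m] i = i := Function.iterate_minimalPeriod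
    have h1 : α i = (e : ZMod p) ^ m * α i := by
      have := hiter i m
      rwa [hfix] at this
    haveI : Fact p.Prime := ⟨hp⟩
    have hem : (e : ZMod p) ^ m = 1 := by
      have : ((e : ZMod p) ^ m - 1) * α i = 0 := by linear_combination -h1
      rcases mul_eq_zero.1 this with h | h
      · exact sub_eq_zero.1 h
      · exact absurd h hi
    have heu : e ^ m = 1 := by
      ext
      push_cast
      exact hem
    have : p - 1 ∣ m := he ▸ orderOf_dvd_of_pow_eq_one heu
    exact Nat.dvd_antisymm hmd this
  refine ⟨key, ?_⟩
  obtain ⟨i, hi⟩ := hα0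
  have hmk : Function.minimalPeriod (⇑γ) i = k := by
    have hmpos : 0 < Function.minimalPeriod (⇑γ) i :=
      (hper i).minimalPeriod_pos hp1
    -- the map n ↦ γ^[n] i from Fin (minimalPeriod) to Fin k is bijective
    set m := Function.minimalPeriod (⇑γ) i with hm
    have hinj : Function.Injective (fun n : Fin m => (⇑γ)^[(n : ℕ)] i) := by
      intro a b hab
      have := Function.iterate_injOn_Iio_minimalPeriod (f := ⇑γ) (x := i)
        (Set.mem_Iio.2 a.2) (Set.mem_Iio.2 b.2) hab
      exact Fin.ext this
    have hsurj : Function.Surjective (fun n : Fin m => (⇑γ)^[(n : ℕ)] i) := by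
      intro j
      obtain ⟨n, hn⟩ := htrans i j
      refine ⟨⟨n % m, Nat.mod_lt _ hmpos⟩, ?_⟩
      show (⇑γ)^[n % Function.minimalPeriod (⇑γ) i] i = j
      rw [Function.iterate_mod_minimalPeriod_eq]
      exact hn
    have := Fintype.card_of_bijective ⟨hinj, hsurj⟩
    simpa using this
  rw [← hmk, key i hi]
end
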